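/- Let n ≥ 2, let Q = Q_n be the n × n ℓ∞-normalized lower-triangular Pascal matrix, W = W_n the diagonal sign matrix, and for 1 ≤ k < n let F_k^{(2)} ∈ ℝ^{n×n} be the block-diagonal matrix diag(I_{k-1}, F̃) where F̃ is lower bidiagonal with F̃_{00} = 1, F̃_{ii} = 2 for i ≥ 1, and F̃_{i,i-1} = 1 for i ≥ 1. Then Q⁻¹ = W F_{n-1}^{(2)} F_{n-2}^{(2)} ⋯ F_1^{(2)} W. -/

import Mathlib

/-- The `ℓ∞`-normalized lower-triangular Pascal matrix:
`(Q_n)_{ij} = 2^{-i} C(i, j)` for `j ≤ i`, else `0`. -/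
noncomputable def Qmat (n : ℕ) : Matrix (Fin n) (Fin n) ℝ :=
  Matrix.of fun i j =>
    if (j : ℕ) ≤ (i : ℕ) then ((2 : ℝ) ^ (i : ℕ))⁻¹ * ((i : ℕ).choose (j : ℕ) : ℝ) else 0

/-- The `n × n` diagonal sign matrix `W_n = diag((-1)^k)`. -/
def Wmat (n : ℕ) : Matrix (Fin n) (Fin n) ℝ :=
  Matrix.diagonal fun k => (-1 : ℝ) ^ (k : ℕ)

/-- The `n × n` block-diagonal matrix `F_k^{(2)} = diag(I_{k-1}, F̃)` where `F̃` is lower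
bidiagonal with `F̃_{00} = 1`, `F̃_{ii} = 2` and `F̃_{i,i-1} = 1` for `i ≥ 1`.
Concretely (zero-indexed): rows `i < k` agree with the identity, and rows `i ≥ k` have the
entry `2` in column `i` and the entry `1` in column `i - 1`. -/
def Fk2mat (n k : ℕ) : Matrix (Fin n) (Fin n) ℝ :=
  Matrix.of fun i j =>
    if (i : ℕ) < k then (if (i : ℕ) = (j : ℕ) then 1 else 0)
    else if (j : ℕ) = (i : ℕ) then 2 else if (j : ℕ) + 1 = (i : ℕ) then 1 else 0

/-- Entries of the partial products `F_k ⋯ F_1`. -/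
noncomputable def gaux (k i j : ℕ) : ℝ :=
  if i - k ≤ j ∧ j ≤ i then ((min i k).choose (j - (i - k)) : ℝ) * 2 ^ (j - (i - k)) else 0

lemma gaux_rec (k i j : ℕ) (h : k + 1 ≤ i) :
    gaux (k + 1) i j = gaux k (i - 1) j + 2 * gaux k i j := by
  unfold gaux
  have h1 : min i (k + 1) = k + 1 := by omega
  have h2 : min (i - 1) k = k := by omega
  have h3 : min i k = k := by omega
  rw [h1, h2, h3]
  by_cases hj1 : i - (k + 1) ≤ j ∧ j ≤ i
  · rw [if_pos hj1]
    obtain ⟨hja, hjb⟩ := hj1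
    by_cases hji : j ≤ i - 1
    · -- t = j - (i - (k+1)) ≤ k
      rw [if_pos ⟨by omega, hji⟩]
      by_cases hjs : i - k ≤ j
      · rw [if_pos ⟨hjs, hjb⟩]
        obtain ⟨u, hu⟩ : ∃ u, j - (i - (k + 1)) = u + 1 := ⟨j - (i - k), by omega⟩
        rw [hu]
        have e1 : j - (i - 1 - k) = u + 1 := by omega
        have e2 : j - (i - k) = u := by omega
        rw [e1, e2, Nat.choose_succ_succ]
        push_cast
        ring
      · rw [if_neg (by omega)]
        have e0 : j - (i - (k + 1)) = 0 := by omega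
        have e1 : j - (i - 1 - k) = 0 := by omega
        rw [e0, e1]
        simp
    · -- j = i, t = k+1
      rw [if_neg (by omega), if_pos ⟨by omega, hjb⟩]
      have e0 : j - (i - (k + 1)) = k + 1 := by omega
      have e1 : j - (i - k) = k := by omega
      rw [e0, e1, Nat.choose_self, Nat.choose_self]
      push_cast
      ring
  · rw [if_neg hj1, if_neg (by omega), if_neg (by omega)]
    ring

lemma prod_F (n k : ℕ) :
    ∀ i j : Fin n,
      (((List.range k).map fun ℓ => Fk2mat n (k - ℓ)).prod) i j = gaux k (i : ℕ) (j : ℕ) := by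
  induction k with
  | zero =>
    intro i j
    simp only [List.range_zero, List.map_nil, List.prod_nil, Matrix.one_apply, gaux]
    have : (i : ℕ) - 0 = (i : ℕ) := rfl
    by_cases h : i = j
    · subst h; simp
    · rw [if_neg h, if_neg (by simp [Fin.ext_iff] at h ⊢; omega)]
  | succ k ih =>
    intro i j
    rw [List.range_succ_eq_map, List.map_cons, List.map_map, List.prod_cons]
    have hcomp : ((fun ℓ => Fk2mat n (k + 1 - ℓ)) ∘ Nat.succ) = fun ℓ => Fk2mat n (k - ℓ) := by
      funext ℓ; simp [Nat.succ_sub_succ]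
    rw [hcomp, Matrix.mul_apply]
    simp only [Nat.sub_zero]
    by_cases hik : (i : ℕ) < k + 1
    · have : ∀ l : Fin n, Fk2mat n (k + 1) i l *
          (((List.range k).map fun ℓ => Fk2mat n (k - ℓ)).prod) l j =
          if i = l then gaux k (l : ℕ) (j : ℕ) else 0 := by
        intro l
        rw [ih l j]
        simp only [Fk2mat, Matrix.of_apply, if_pos hik, Fin.ext_iff]
        split_ifs <;> ring
      rw [Finset.sum_congr rfl fun l _ => this l, Finset.sum_ite_eq]
      simp only [Finset.mem_univ, if_pos]
      unfold gaux
      have e1 : (i : ℕ) - k = 0 := by omega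
      have e2 : (i : ℕ) - (k + 1) = 0 := by omega
      have e3 : min (i : ℕ) k = (i : ℕ) := by omega
      have e4 : min (i : ℕ) (k + 1) = (i : ℕ) := by omega
      rw [e1, e2, e3, e4]
    · have hik' : k + 1 ≤ (i : ℕ) := by omega
      have hi1 : (i : ℕ) - 1 < n := by omega
      set i' : Fin n := ⟨(i : ℕ) - 1, hi1⟩ with hi'
      have : ∀ l : Fin n, Fk2mat n (k + 1) i l *
          (((List.range k).map fun ℓ => Fk2mat n (k - ℓ)).prod) l j =
          (if i' = l then gaux k (l : ℕ) (j : ℕ) else 0) +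
          (if i = l then 2 * gaux k (l : ℕ) (j : ℕ) else 0) := by
        intro l
        rw [ih l j]
        simp only [Fk2mat, Matrix.of_apply, if_neg hik, Fin.ext_iff, hi']
        split_ifs
        all_goals try ring
        all_goals exfalso
        all_goals omega
      rw [Finset.sum_congr rfl fun l _ => this l, Finset.sum_add_distrib,
        Finset.sum_ite_eq, Finset.sum_ite_eq]
      simp only [Finset.mem_univ, if_pos, hi']
      exact (gaux_rec k (i : ℕ) (j : ℕ) hik').symm

lemma key_sum (n i j : ℕ) (hi : i < n) :
    ∑ l ∈ Finset.range n,
      (if l ≤ i then ((2 : ℝ) ^ i)⁻¹ * (i.choose l : ℝ) else 0) *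
        ((-1 : ℝ) ^ l * (if j ≤ l then (l.choose j : ℝ) * 2 ^ j else 0) * (-1 : ℝ) ^ j) =
      if i = j then 1 else 0 := by
  by_cases hij : j ≤ i
  · rw [← Finset.sum_subset (s₁ := Finset.Ico j (i + 1))
      (fun x hx => by simp only [Finset.mem_Ico, Finset.mem_range] at hx ⊢; omega) ?_]
    · rw [Finset.sum_Ico_eq_sum_range]
      have hsz : i + 1 - j = i - j + 1 := by omega
      rw [hsz]
      have hterm : ∀ t ∈ Finset.range (i - j + 1),
          (if j + t ≤ i then ((2 : ℝ) ^ i)⁻¹ * (i.choose (j + t) : ℝ) else 0) *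
            ((-1 : ℝ) ^ (j + t) * (if j ≤ j + t then ((j + t).choose j : ℝ) * 2 ^ j else 0) *
              (-1 : ℝ) ^ j) =
          (((2 : ℝ) ^ i)⁻¹ * 2 ^ j * (i.choose j : ℝ)) *
            ((-1 : ℝ) ^ t * ((i - j).choose t : ℝ)) := by
        intro t ht
        simp only [Finset.mem_range] at ht
        rw [if_pos (by omega), if_pos (by omega)]
        have hc : (i.choose (j + t) : ℝ) * ((j + t).choose j : ℝ) =
            (i.choose j : ℝ) * ((i - j).choose t : ℝ) := by
          have h := Nat.choose_mul (n := i) (k := j + t) (s := j) (by omega)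
          have h2 : j + t - j = t := by omega
          rw [h2] at h
          exact_mod_cast congrArg (Nat.cast (R := ℝ)) h
        have hjj : ((-1 : ℝ)) ^ j * (-1) ^ j = 1 := by
          rw [← pow_add, ← two_mul, pow_mul]; norm_num
        rw [pow_add]
        linear_combination (((2 : ℝ) ^ i)⁻¹ * 2 ^ j * (-1) ^ t * ((-1 : ℝ) ^ j * (-1) ^ j)) * hc +
          (((2 : ℝ) ^ i)⁻¹ * 2 ^ j * (-1) ^ t * ((i.choose j : ℝ) * ((i - j).choose t : ℝ))) * hjj
      rw [Finset.sum_congr rfl hterm, ← Finset.mul_sum]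
      have halt : ∑ t ∈ Finset.range (i - j + 1), ((-1 : ℝ) ^ t * ((i - j).choose t : ℝ)) =
          if i - j = 0 then 1 else 0 := by
        have h := Int.alternating_sum_range_choose (n := i - j)
        have h2 := congrArg (fun z : ℤ => (z : ℝ)) h
        push_cast at h2
        convert h2 using 2
      rw [halt]
      by_cases hij2 : i = j
      · subst hij2
        simp only [Nat.sub_self, if_pos rfl, Nat.choose_self, Nat.cast_one, mul_one]
        rw [inv_mul_cancel₀ (by positivity)]
        simp
      · rw [if_neg (by omega), if_neg hij2, mul_zero]
    · intro x hx hnx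
      simp only [Finset.mem_Ico, Finset.mem_range, not_and, not_le] at hx hnx
      split_ifs
      all_goals try ring
      all_goals exfalso
      all_goals omega
  · rw [if_neg (by omega)]
    apply Finset.sum_eq_zero
    intro l hl
    split_ifs
    all_goals try ring
    all_goals exfalso
    all_goals omega

/-- `Q⁻¹ = W F_{n-1}^{(2)} F_{n-2}^{(2)} ⋯ F_1^{(2)} W`. -/
theorem normalized_pascal_inv_F_factorization (n : ℕ) (hn : 2 ≤ n) :
    (Qmat n)⁻¹ =
      Wmat n * (((List.range (n - 1)).map fun ℓ => Fk2mat n (n - 1 - ℓ))).prod * Wmat n := by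
  apply Matrix.inv_eq_right_inv
  ext i j
  rw [Matrix.mul_apply]
  set f : ℕ → ℝ := fun l =>
    (if l ≤ (i : ℕ) then ((2 : ℝ) ^ (i : ℕ))⁻¹ * ((i : ℕ).choose l : ℝ) else 0) *
      ((-1 : ℝ) ^ l * (if (j : ℕ) ≤ l then (l.choose (j : ℕ) : ℝ) * 2 ^ (j : ℕ) else 0) *
        (-1 : ℝ) ^ (j : ℕ)) with hf
  have hterm : ∀ l : Fin n,
      Qmat n i l *
        (Wmat n * (((List.range (n - 1)).map fun ℓ => Fk2mat n (n - 1 - ℓ))).prod * Wmat n) l j =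
      f (l : ℕ) := by
    intro l
    rw [Wmat, Matrix.mul_diagonal, Matrix.diagonal_mul, prod_F]
    have e1 : (l : ℕ) - (n - 1) = 0 := by omega
    have e2 : min (l : ℕ) (n - 1) = (l : ℕ) := by omega
    simp only [hf, Qmat, Matrix.of_apply, gaux, e1, e2, Nat.sub_zero, Nat.zero_le, true_and]
  rw [show (∑ l : Fin n, Qmat n i l *
        (Wmat n * (((List.range (n - 1)).map fun ℓ => Fk2mat n (n - 1 - ℓ))).prod * Wmat n) l j)
      = ∑ l ∈ Finset.range n, f l from by
    rw [← Fin.sum_univ_eq_sum_range f n]; exact Finset.sum_congr rfl fun l _ => hterm l]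
  rw [hf, key_sum n (i : ℕ) (j : ℕ) i.isLt, Matrix.one_apply]
  congr 1
  simp [Fin.ext_iff]
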